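/- Let M be an abelian group, G a group, and σ : M → G a function such that the map (m, m') ↦ σ(m)σ(m')σ(m+m')⁻¹ takes values in an abelian subgroup H of G and is ℤ-bilinear as a map M × M → H. Then there exists a unique group homomorphism f : UM → G with f ∘ s = σ. -/

import Mathlib

open scoped TensorProduct

/-- The group `UM`: the kernel of `(T^{<3}M)^× → ℤ^× = {±1}`, where
`T^{<3}M = ℤ ⊕ M ⊕ (M ⊗_ℤ M)` is the tensor algebra of `M` over `ℤ` truncated in
degrees `< 3`.  An element `1 + m + t` (with `m : M`, `t : M ⊗[ℤ] M`) is encoded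
as the pair `⟨m, t⟩`, and the multiplication is
`(1+m+t)(1+m'+t') = 1 + (m+m') + (m ⊗ m' + t + t')`. -/
@[ext]
structure UGroup (M : Type) [AddCommGroup M] where
  m : M
  t : TensorProduct ℤ M M

namespace UGroup

variable {M : Type} [AddCommGroup M]

noncomputable instance : Mul (UGroup M) :=
  ⟨fun x y => ⟨x.m + y.m, x.m ⊗ₜ[ℤ] y.m + x.t + y.t⟩⟩
noncomputable instance : One (UGroup M) := ⟨⟨0, 0⟩⟩
noncomputable instance : Inv (UGroup M) :=
  ⟨fun x => ⟨-x.m, x.m ⊗ₜ[ℤ] x.m - x.t⟩⟩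

@[simp] lemma mul_m (x y : UGroup M) : (x * y).m = x.m + y.m := rfl
@[simp] lemma mul_t (x y : UGroup M) : (x * y).t = x.m ⊗ₜ[ℤ] y.m + x.t + y.t := rfl
@[simp] lemma one_m : (1 : UGroup M).m = 0 := rfl
@[simp] lemma one_t : (1 : UGroup M).t = 0 := rfl
@[simp] lemma inv_m (x : UGroup M) : (x⁻¹).m = -x.m := rfl
@[simp] lemma inv_t (x : UGroup M) : (x⁻¹).t = x.m ⊗ₜ[ℤ] x.m - x.t := rfl

noncomputable instance : Group (UGroup M) where
  mul_assoc x y z := by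
    ext
    · simp [add_assoc]
    · simp [TensorProduct.add_tmul, TensorProduct.tmul_add]
      abel
  one_mul x := by ext <;> simp
  mul_one x := by ext <;> simp
  inv_mul_cancel x := by
    ext
    · simp
    · simp [TensorProduct.neg_tmul]
      abel

/-- The set-theoretic section `s : M → UM`, `m ↦ 1 + m`. -/
noncomputable def s (m : M) : UGroup M := ⟨m, 0⟩

end UGroup

/-- Universal property of `UM` (Proposition 2.1): if `σ : M → G` is a set map to a
group `G` such that `(m, m') ↦ σ(m) σ(m') σ(m+m')⁻¹` takes values in an abelian
subgroup `H` of `G` and is ℤ-bilinear (i.e. bi-additive) as a map `M × M → H`, then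
`σ` factors uniquely through a group homomorphism `f : UM → G` with `f ∘ s = σ`. -/
theorem self_cup_stmt_1 (M : Type) [AddCommGroup M] (G : Type) [Group G]
    (σ : M → G) (H : Subgroup G)
    (habelian : ∀ x ∈ H, ∀ y ∈ H, x * y = y * x)
    (hmem : ∀ m m' : M, σ m * σ m' * (σ (m + m'))⁻¹ ∈ H)
    (hbil_left : ∀ m₁ m₂ m' : M,
      σ (m₁ + m₂) * σ m' * (σ (m₁ + m₂ + m'))⁻¹ =
        (σ m₁ * σ m' * (σ (m₁ + m'))⁻¹) * (σ m₂ * σ m' * (σ (m₂ + m'))⁻¹))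
    (hbil_right : ∀ m m₁' m₂' : M,
      σ m * σ (m₁' + m₂') * (σ (m + (m₁' + m₂')))⁻¹ =
        (σ m * σ m₁' * (σ (m + m₁'))⁻¹) * (σ m * σ m₂' * (σ (m + m₂'))⁻¹)) :
    ∃! f : UGroup M →* G, ∀ m : M, f (UGroup.s m) = σ m := by
  letI : CommGroup ↥H :=
    { (inferInstance : Group ↥H) with
      mul_comm := fun a b => Subtype.ext (habelian a a.2 b b.2) }
  set β : M → M → ↥H := fun m m' => ⟨σ m * σ m' * (σ (m + m'))⁻¹, hmem m m'⟩ with hβdef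
  have hb_left : ∀ m₁ m₂ m' : M, β (m₁ + m₂) m' = β m₁ m' * β m₂ m' :=
    fun m₁ m₂ m' => Subtype.ext (hbil_left m₁ m₂ m')
  have hb_right : ∀ m m₁ m₂ : M, β m (m₁ + m₂) = β m m₁ * β m m₂ :=
    fun m m₁ m₂ => Subtype.ext (hbil_right m m₁ m₂)
  have key : ∀ m m' : M, σ m * σ m' = (β m m' : G) * σ (m + m') := by
    intro m m'
    show σ m * σ m' = σ m * σ m' * (σ (m + m'))⁻¹ * σ (m + m')
    rw [inv_mul_cancel_right]
  have hσ0 : σ 0 = 1 := by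
    have h := hbil_left (0 : M) 0 0
    simp only [add_zero] at h
    have e : σ (0 : M) * σ 0 * (σ (0 : M))⁻¹ = σ 0 := by
      rw [mul_inv_cancel_right]
    rw [e] at h
    exact left_eq_mul.mp h
  -- β-values commute with σ-values
  have hcomm : ∀ a m m' : M, σ a * (β m m' : G) = (β m m' : G) * σ a := by
    intro a m m'
    have h1 : σ a * σ m * σ m' = (β a m : G) * (β (a + m) m' : G) * σ (a + m + m') := by
      rw [key a m, mul_assoc, key (a + m) m', ← mul_assoc]
    have h3 : σ a * σ (m + m') = ((β a m : G) * (β a m' : G)) * σ (a + m + m') := by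
      have e : ((β a (m + m') : ↥H) : G) = ((β a m * β a m' : ↥H) : G) :=
        congrArg (fun h : ↥H => (h : G)) (hb_right a m m')
      rw [key a (m + m'), ← add_assoc, e, Subgroup.coe_mul]
    have h2 : σ a * σ m * σ m' =
        σ a * (β m m' : G) * (σ a)⁻¹ * (((β a m : G) * (β a m' : G)) * σ (a + m + m')) := by
      rw [← h3, mul_assoc (σ a) (σ m) (σ m'), key m m',
        mul_assoc (σ a * (β m m' : G)) (σ a)⁻¹, inv_mul_cancel_left, ← mul_assoc]
    have h4 : (β a m : G) * (β (a + m) m' : G) =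
        σ a * (β m m' : G) * (σ a)⁻¹ * ((β a m : G) * (β a m' : G)) := by
      have h12 := h1.symm.trans h2
      rw [← mul_assoc _ _ (σ (a + m + m'))] at h12
      exact mul_right_cancel h12
    have hH : β a m * β (a + m) m' = β m m' * (β a m * β a m') := by
      rw [hb_left a m m']
      rw [mul_comm (β m m') (β a m * β a m'), mul_assoc, mul_comm (β a m') (β m m'),
        ← mul_assoc, mul_assoc]
    have hHG : (β a m : G) * (β (a + m) m' : G) =
        (β m m' : G) * ((β a m : G) * (β a m' : G)) := by
      have := congrArg (fun h : ↥H => (h : G)) hH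
      simpa only [Subgroup.coe_mul] using this
    have h6 : (β m m' : G) = σ a * (β m m' : G) * (σ a)⁻¹ :=
      mul_right_cancel (hHG.symm.trans h4)
    conv_rhs => rw [h6]
    rw [inv_mul_cancel_right]
  -- the linear map c : M ⊗ M → Additive H
  let b1 : M → M →+ Additive ↥H := fun m =>
    AddMonoidHom.mk' (fun m' => Additive.ofMul (β m m'))
      (fun m₁ m₂ => congrArg Additive.ofMul (hb_right m m₁ m₂))
  let b2 : M →+ (M →ₗ[ℤ] Additive ↥H) :=
    AddMonoidHom.mk' (fun m => (b1 m).toIntLinearMap)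
      (fun m₁ m₂ => LinearMap.ext fun m' =>
        congrArg Additive.ofMul (hb_left m₁ m₂ m'))
  let c : TensorProduct ℤ M M →ₗ[ℤ] Additive ↥H := TensorProduct.lift b2.toIntLinearMap
  have hc_tmul : ∀ m m' : M, c (m ⊗ₜ[ℤ] m') = Additive.ofMul (β m m') := fun m m' => rfl
  let toG : Additive ↥H → G := fun a => ((Additive.toMul a : ↥H) : G)
  have htoG_add : ∀ a a' : Additive ↥H, toG (a + a') = toG a * toG a' := fun _ _ => rfl
  have htoG_zero : toG 0 = 1 := rfl
  have hcommc : ∀ (a : M) (t : TensorProduct ℤ M M),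
      σ a * toG (c t) = toG (c t) * σ a := by
    intro a t
    induction t using TensorProduct.induction_on with
    | zero => rw [map_zero, htoG_zero, mul_one, one_mul]
    | tmul m m' => rw [hc_tmul]; exact hcomm a m m'
    | add t t' ih ih' =>
        rw [map_add, htoG_add, ← mul_assoc, ih, mul_assoc, ih', ← mul_assoc]
  let F : UGroup M → G := fun x => σ x.m * toG (c x.t)
  have hFmul : ∀ x y : UGroup M, F (x * y) = F x * F y := by
    intro x y
    show σ (x.m + y.m) * toG (c (x.m ⊗ₜ[ℤ] y.m + x.t + y.t)) =
      (σ x.m * toG (c x.t)) * (σ y.m * toG (c y.t))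
    rw [map_add, map_add, htoG_add, htoG_add, hc_tmul]
    have e1 : toG (Additive.ofMul (β x.m y.m)) = ((β x.m y.m : ↥H) : G) := rfl
    rw [e1, ← mul_assoc, ← mul_assoc, hcomm, ← key]
    rw [mul_assoc (σ x.m) (σ y.m) (toG (c x.t)), hcommc y.m x.t]
    simp only [mul_assoc]
  let f : UGroup M →* G := MonoidHom.mk' F hFmul
  have hfs : ∀ m : M, f (UGroup.s m) = σ m := by
    intro m
    show σ m * toG (c (0 : TensorProduct ℤ M M)) = σ m
    rw [map_zero, htoG_zero, mul_one]
  refine ⟨f, hfs, ?_⟩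
  intro g hg
  ext x
  have hdecomp : x = (⟨0, x.t⟩ : UGroup M) * UGroup.s x.m := by
    ext <;> simp [UGroup.s]
  have hzero : ∀ t : TensorProduct ℤ M M, g (⟨0, t⟩ : UGroup M) = toG (c t) := by
    intro t
    induction t using TensorProduct.induction_on with
    | zero =>
        have h1 : (⟨0, 0⟩ : UGroup M) = 1 := rfl
        rw [h1, map_one, map_zero, htoG_zero]
    | tmul m m' =>
        have hx : (⟨0, m ⊗ₜ[ℤ] m'⟩ : UGroup M) =
            UGroup.s m * UGroup.s m' * (UGroup.s (m + m'))⁻¹ := by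
          ext
          · simp [UGroup.s]
          · simp [UGroup.s, TensorProduct.tmul_add, TensorProduct.add_tmul,
              TensorProduct.neg_tmul, TensorProduct.tmul_neg]
            abel
        rw [hx, map_mul, map_mul, map_inv, hg, hg, hg, hc_tmul]
        rfl
    | add t t' ih ih' =>
        have hx : (⟨0, t + t'⟩ : UGroup M) = (⟨0, t⟩ : UGroup M) * ⟨0, t'⟩ := by
          ext <;> simp
        rw [hx, map_mul, ih, ih', map_add, htoG_add]
  calc g x = g (⟨0, x.t⟩ : UGroup M) * g (UGroup.s x.m) := by rw [← map_mul, ← hdecomp]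
    _ = toG (c x.t) * σ x.m := by rw [hzero, hg]
    _ = σ x.m * toG (c x.t) := (hcommc x.m x.t).symm
    _ = f x := rfl
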